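/- Let f : ℝ → [0,∞) be right-continuous with left limits everywhere. Define F₊ = {x : f(x) = 0} and F₋ = {x : f(x-) = 0}, where f(x-) denotes the left limit of f at x. Then the set F = F₊ ∪ F₋ is closed in ℝ. -/

import Mathlib

open Filter Set

private lemma leftLim_tendsto_right' (f : ℝ → ℝ)
    (hrc : ∀ x, ContinuousWithinAt f (Set.Ici x) x)
    (hll : ∀ x, Tendsto f (nhdsWithin x (Set.Iio x)) (nhds (Function.leftLim f x)))
    (x : ℝ) : Tendsto (Function.leftLim f) (nhdsWithin x (Set.Ioi x)) (nhds (f x)) := by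
  rw [Metric.tendsto_nhdsWithin_nhds]
  intro ε hε
  have h := hrc x
  rw [ContinuousWithinAt, Metric.tendsto_nhdsWithin_nhds] at h
  obtain ⟨δ, hδ, hδ'⟩ := h (ε/2) (by linarith)
  refine ⟨δ, hδ, ?_⟩
  intro y hy hyd
  have hxy : x < y := hy
  have hev : ∀ᶠ z in nhdsWithin y (Set.Iio y),
      f z ∈ Metric.closedBall (f x) (ε/2) := by
    filter_upwards [Ioo_mem_nhdsLT_of_mem (show y ∈ Set.Ioc x y from ⟨hxy, le_refl y⟩)]
      with z hz
    have h1 : z ∈ Set.Ici x := le_of_lt hz.1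
    have h2 : dist z x < δ := by
      rw [Real.dist_eq] at hyd ⊢
      rw [abs_of_pos (by linarith [hz.1] : (0:ℝ) < z - x)]
      rw [abs_of_pos (by linarith : (0:ℝ) < y - x)] at hyd
      linarith [hz.2]
    exact Metric.mem_closedBall.mpr (le_of_lt (hδ' h1 h2))
  have hmem : Function.leftLim f y ∈ Metric.closedBall (f x) (ε/2) :=
    Metric.isClosed_closedBall.mem_of_tendsto (hll y) hev
  have := Metric.mem_closedBall.mp hmem
  linarith

private lemma leftLim_tendsto_left' (f : ℝ → ℝ)
    (hll : ∀ x, Tendsto f (nhdsWithin x (Set.Iio x)) (nhds (Function.leftLim f x)))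
    (x : ℝ) : Tendsto (Function.leftLim f)
      (nhdsWithin x (Set.Iio x)) (nhds (Function.leftLim f x)) := by
  rw [Metric.tendsto_nhdsWithin_nhds]
  intro ε hε
  have h := hll x
  rw [Metric.tendsto_nhdsWithin_nhds] at h
  obtain ⟨δ, hδ, hδ'⟩ := h (ε/2) (by linarith)
  refine ⟨δ, hδ, ?_⟩
  intro y hy hyd
  have hxy : y < x := hy
  have hylb : x - δ < y := by
    rw [Real.dist_eq, abs_of_neg (by linarith : y - x < 0)] at hyd
    linarith
  have hev : ∀ᶠ z in nhdsWithin y (Set.Iio y),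
      f z ∈ Metric.closedBall (Function.leftLim f x) (ε/2) := by
    filter_upwards [Ioo_mem_nhdsLT_of_mem (show y ∈ Set.Ioc (x - δ) y from ⟨hylb, le_refl y⟩)]
      with z hz
    have h1 : z ∈ Set.Iio x := by
      have := hz.2; simp only [Set.mem_Iio]; linarith
    have h2 : dist z x < δ := by
      rw [Real.dist_eq, abs_of_neg (by simp only [Set.mem_Iio] at h1; linarith : z - x < 0)]
      linarith [hz.1]
    exact Metric.mem_closedBall.mpr (le_of_lt (hδ' h1 h2))
  have hmem : Function.leftLim f y ∈ Metric.closedBall (Function.leftLim f x) (ε/2) :=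
    Metric.isClosed_closedBall.mem_of_tendsto (hll y) hev
  have := Metric.mem_closedBall.mp hmem
  linarith

/-- For a càdlàg function `f : ℝ → [0,∞)`, the set
`F = {f = 0} ∪ {f(·-) = 0}` is closed. -/
theorem zero_set_union_leftLim_zero_set_isClosed
    (f : ℝ → ℝ) (hnn : ∀ x, 0 ≤ f x)
    (hrc : ∀ x, ContinuousWithinAt f (Set.Ici x) x)
    (hll : ∀ x, Tendsto f (nhdsWithin x (Set.Iio x)) (nhds (Function.leftLim f x))) :
    IsClosed ({x : ℝ | f x = 0} ∪ {x : ℝ | Function.leftLim f x = 0}) := by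
  rw [isClosed_iff_clusterPt]
  intro a ha
  set Fp : Set ℝ := {x : ℝ | f x = 0} with hFp
  set Fm : Set ℝ := {x : ℝ | Function.leftLim f x = 0} with hFm
  have ha' : (nhdsWithin a (Fp ∪ Fm)).NeBot := ha
  have key : ∀ (g : ℝ → ℝ) (s t : Set ℝ) (c : ℝ), (nhdsWithin a s).NeBot → s ⊆ t →
      Tendsto g (nhdsWithin a t) (nhds c) → (∀ y ∈ s, g y = 0) → c = 0 := by
    intro g s t c hne hsub htend hzero
    have h1 : Tendsto g (nhdsWithin a s) (nhds c) :=
      htend.mono_left (nhdsWithin_mono a hsub)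
    have h2 : Tendsto g (nhdsWithin a s) (nhds 0) := by
      apply Tendsto.congr' _ tendsto_const_nhds
      filter_upwards [self_mem_nhdsWithin] with y hy
      exact (hzero y hy).symm
    exact tendsto_nhds_unique h1 h2
  have hsplit : ∀ s : Set ℝ, (nhdsWithin a s).NeBot →
      (nhdsWithin a (s ∩ Set.Ici a)).NeBot ∨ (nhdsWithin a (s ∩ Set.Iio a)).NeBot := by
    intro s hs
    have : s = s ∩ Set.Ici a ∪ s ∩ Set.Iio a := by
      rw [← Set.inter_union_distrib_left, show Set.Ici a ∪ Set.Iio a = Set.univ by ext z; simp [le_or_gt], Set.inter_univ]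
    rw [this, nhdsWithin_union, sup_neBot] at hs
    exact hs
  rw [nhdsWithin_union, sup_neBot] at ha'
  rcases ha' with hp | hm
  · rcases hsplit Fp hp with h | h
    · left
      exact key f (Fp ∩ Set.Ici a) (Set.Ici a) (f a) h Set.inter_subset_right (hrc a)
        (fun y hy => hy.1)
    · right
      exact key f (Fp ∩ Set.Iio a) (Set.Iio a) (Function.leftLim f a) h
        Set.inter_subset_right (hll a) (fun y hy => hy.1)
  · by_cases hxa : Function.leftLim f a = 0
    · right; exact hxa
    rcases hsplit Fm hm with h | h
    · left
      have heq : Fm ∩ Set.Ici a = Fm ∩ Set.Ioi a := by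
        ext y
        constructor
        · rintro ⟨h1, h2⟩
          refine ⟨h1, (show a < y from lt_of_le_of_ne h2 ?_)⟩
          rintro rfl
          exact hxa h1
        · rintro ⟨h1, h2⟩
          exact ⟨h1, (show a ≤ y from le_of_lt h2)⟩
      rw [heq] at h
      exact key (Function.leftLim f) (Fm ∩ Set.Ioi a) (Set.Ioi a) (f a) h
        Set.inter_subset_right (leftLim_tendsto_right' f hrc hll a) (fun y hy => hy.1)
    · right
      exact key (Function.leftLim f) (Fm ∩ Set.Iio a) (Set.Iio a) (Function.leftLim f a) h
        Set.inter_subset_right (leftLim_tendsto_left' f hll a) (fun y hy => hy.1)
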